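/- Under the stated coupled-chain assumptions, for any integers 1 ≤ k⋆ < m⋆ the time-averaged Rhee–Glynn estimator H = (1/(m⋆ − k⋆ + 1)) Σ_{k=k⋆}^{m⋆} φ(X_k) + Σ_{k=k⋆+1}^{τ−1} (min(m⋆ − k⋆ + 1, k − k⋆)/(m⋆ − k⋆ + 1)) (φ(X_k) − φ(X̊_k)) is integrable and E[H] = π(φ). That is, averaging the Markov chain between iterations k⋆ and m⋆ with the appropriately weighted bias-correction terms still yields an unbiased estimator of π(φ). -/

import Mathlib

open MeasureTheory ProbabilityTheory Filter
open scoped ENNReal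

lemma rg_abel (a : ℕ → ℝ) (kstar mstar : ℕ) (hkm : kstar ≤ mstar) :
    ∀ n, kstar ≤ n →
      ∑ j ∈ Finset.Ico (kstar + 1) (n + 1),
          ((min (mstar - kstar + 1) (j - kstar) : ℕ) : ℝ) * (a j - a (j - 1)) =
        ∑ k ∈ Finset.Icc kstar mstar, (a (max n k) - a k) := by
  intro n hn
  induction n, hn using Nat.le_induction with
  | base =>
    rw [Finset.Ico_self, Finset.sum_empty]
    refine (Finset.sum_eq_zero fun k hk => ?_).symm
    rw [max_eq_right (Finset.mem_Icc.1 hk).1, sub_self]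
  | succ n hn ih =>
    rw [Finset.sum_Ico_succ_top (by omega), ih]
    have hsplit : ∀ k ∈ Finset.Icc kstar mstar,
        a (max (n + 1) k) - a k
          = (a (max n k) - a k) + (if k ≤ n then a (n + 1) - a n else 0) := by
      intro k hk
      rcases le_or_gt k n with h | h
      · rw [if_pos h, max_eq_left (h.trans (Nat.le_succ n)), max_eq_left h]; ring
      · rw [if_neg (not_le.2 h), max_eq_right h, max_eq_right (Nat.le_of_lt_succ (by omega))]
        ring
    rw [Finset.sum_congr rfl hsplit, Finset.sum_add_distrib]
    congr 1
    have hfil : (Finset.Icc kstar mstar).filter (fun k => k ≤ n)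
        = Finset.Icc kstar (min mstar n) := by
      ext k; simp only [Finset.mem_filter, Finset.mem_Icc]; omega
    rw [← Finset.sum_filter, hfil, Finset.sum_const, Nat.card_Icc, nsmul_eq_mul]
    have h1 : (n + 1 - 1) = n := by omega
    have h2 : (min mstar n + 1 - kstar) = min (mstar - kstar + 1) (n + 1 - kstar) := by omega
    rw [h1, h2]

/-- Unbiasedness of the time-averaged Rhee–Glynn coupled-chain estimator:
for `1 ≤ k⋆ < m⋆`, the estimator
`H = (m⋆−k⋆+1)⁻¹ Σ_{k=k⋆}^{m⋆} φ(X_k)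
   + Σ_{k=k⋆+1}^{τ−1} (min(m⋆−k⋆+1, k−k⋆)/(m⋆−k⋆+1)) (φ(X_k) − φ(X̊_k))`
is integrable with expectation `π(φ)`. -/
theorem time_averaged_rhee_glynn_estimator_unbiased
    {Ω : Type*} [MeasurableSpace Ω] (P : Measure Ω) [IsProbabilityMeasure P]
    {S : Type*} [MeasurableSpace S]
    (π : Measure S) [IsProbabilityMeasure π]
    (φ : S → ℝ) (hφm : Measurable φ) (hφb : ∃ C, ∀ s, |φ s| ≤ C)
    (X X' : ℕ → Ω → S)
    (hXm : ∀ k, Measurable (X k)) (hX'm : ∀ k, Measurable (X' k))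
    (hident : ∀ k, 1 ≤ k → IdentDistrib (X' k) (X (k - 1)) P P)
    (hconv : Tendsto (fun k => ∫ ω, φ (X k ω) ∂P) atTop (nhds (∫ s, φ s ∂π)))
    (τ : Ω → ℕ) (hτ : ∀ ω, τ ω = sInf {k | 1 ≤ k ∧ X k ω = X' k ω})
    (C ρ : ℝ) (hρ : ρ ∈ Set.Ioo (0 : ℝ) 1)
    (htail : ∀ k, P {ω | k < τ ω} ≤ ENNReal.ofReal (C * ρ ^ k))
    (hfaithful : ∀ᵐ ω ∂P, ∀ k, τ ω ≤ k → X k ω = X' k ω)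
    (kstar mstar : ℕ) (hk : 1 ≤ kstar) (hkm : kstar < mstar) :
    Integrable (fun ω =>
        ((mstar - kstar + 1 : ℕ) : ℝ)⁻¹ * ∑ k ∈ Finset.Icc kstar mstar, φ (X k ω) +
        ∑ k ∈ Finset.Ico (kstar + 1) (τ ω),
          (((min (mstar - kstar + 1) (k - kstar) : ℕ) : ℝ) /
            ((mstar - kstar + 1 : ℕ) : ℝ)) * (φ (X k ω) - φ (X' k ω))) P ∧
      ∫ ω, (((mstar - kstar + 1 : ℕ) : ℝ)⁻¹ *
          ∑ k ∈ Finset.Icc kstar mstar, φ (X k ω) +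
        ∑ k ∈ Finset.Ico (kstar + 1) (τ ω),
          (((min (mstar - kstar + 1) (k - kstar) : ℕ) : ℝ) /
            ((mstar - kstar + 1 : ℕ) : ℝ)) * (φ (X k ω) - φ (X' k ω))) ∂P =
        ∫ s, φ s ∂π := by
  classical
  obtain ⟨M₀, hM₀⟩ := hφb
  set M : ℝ := max M₀ 0 with hMdef
  have hM : ∀ s, |φ s| ≤ M := fun s => (hM₀ s).trans (le_max_left _ _)
  have hM0 : (0 : ℝ) ≤ M := le_max_right _ _
  set N : ℕ := mstar - kstar + 1 with hNdef
  have hNpos : (0 : ℝ) < (N : ℝ) := by positivity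
  have hNne : ((N : ℕ) : ℝ) ≠ 0 := ne_of_gt hNpos
  set a : ℕ → ℝ := fun n => ∫ ω, φ (X n ω) ∂P with ha
  set w : ℕ → ℝ := fun j => ((min N (j - kstar) : ℕ) : ℝ) / (N : ℝ) with hw
  set Δ : ℕ → Ω → ℝ := fun j ω => φ (X j ω) - φ (X' j ω) with hΔ
  set A : Ω → ℝ := fun ω => ((N : ℕ) : ℝ)⁻¹ * ∑ k ∈ Finset.Icc kstar mstar, φ (X k ω) with hA
  set H : Ω → ℝ := fun ω => A ω + ∑ j ∈ Finset.Ico (kstar + 1) (τ ω), w j * Δ j ω with hH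
  set g : ℕ → Ω → ℝ :=
    fun n ω => A ω + ∑ j ∈ Finset.Ico (kstar + 1) (n + 1), w j * Δ j ω with hg
  -- basic integrability
  have hφXint : ∀ k, Integrable (fun ω => φ (X k ω)) P := by
    intro k
    refine (integrable_const M).mono' (hφm.comp (hXm k)).aestronglyMeasurable ?_
    exact Eventually.of_forall fun ω => by simpa [Real.norm_eq_abs] using hM (X k ω)
  have hφX'int : ∀ k, Integrable (fun ω => φ (X' k ω)) P := by
    intro k
    refine (integrable_const M).mono' (hφm.comp (hX'm k)).aestronglyMeasurable ?_
    exact Eventually.of_forall fun ω => by simpa [Real.norm_eq_abs] using hM (X' k ω)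
  have hΔint : ∀ j, Integrable (Δ j) P := fun j => (hφXint j).sub (hφX'int j)
  have hAint : Integrable A P :=
    (integrable_finset_sum _ fun k _ => hφXint k).const_mul _
  have hgint : ∀ n, Integrable (g n) P := fun n =>
    hAint.add (integrable_finset_sum _ fun j _ => (hΔint j).const_mul (w j))
  -- identically distributed shift
  have hΔint_eq : ∀ j, 1 ≤ j → ∫ ω, Δ j ω ∂P = a j - a (j - 1) := by
    intro j hj
    have h1 : ∫ ω, φ (X' j ω) ∂P = ∫ ω, φ (X (j - 1) ω) ∂P :=
      ((hident j hj).comp hφm).integral_eq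
    rw [hΔ]
    rw [integral_sub (hφXint j) (hφX'int j), h1]
  -- expectation of g n for n ≥ mstar
  have key : ∀ n, mstar ≤ n → ∫ ω, g n ω ∂P = a n := by
    intro n hn
    have hInt2 : ∀ j ∈ Finset.Ico (kstar + 1) (n + 1),
        Integrable (fun ω => w j * Δ j ω) P := fun j _ => (hΔint j).const_mul (w j)
    rw [hg]
    rw [integral_add hAint (integrable_finset_sum _ hInt2), integral_finset_sum _ hInt2]
    have hIA : ∫ ω, A ω ∂P = ((N : ℕ) : ℝ)⁻¹ * ∑ k ∈ Finset.Icc kstar mstar, a k := by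
      rw [hA, integral_const_mul, integral_finset_sum _ fun k _ => hφXint k]
    have hIj : ∀ j ∈ Finset.Ico (kstar + 1) (n + 1),
        ∫ ω, w j * Δ j ω ∂P = (N : ℝ)⁻¹ * (((min N (j - kstar) : ℕ) : ℝ) * (a j - a (j - 1))) := by
      intro j hj
      have hj1 : 1 ≤ j := by have := (Finset.mem_Ico.1 hj).1; omega
      rw [integral_const_mul, hΔint_eq j hj1, hw]
      ring
    rw [hIA, Finset.sum_congr rfl hIj, ← Finset.mul_sum,
      rg_abel a kstar mstar (le_of_lt hkm) n (le_trans (le_of_lt hkm) hn)]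
    have hmax : ∀ k ∈ Finset.Icc kstar mstar, a (max n k) - a k = a n - a k := by
      intro k hk
      rw [max_eq_left (le_trans (Finset.mem_Icc.1 hk).2 hn)]
    rw [Finset.sum_congr rfl hmax, Finset.sum_sub_distrib, Finset.sum_const, Nat.card_Icc,
      nsmul_eq_mul]
    have hcard : ((mstar + 1 - kstar : ℕ) : ℝ) = (N : ℝ) := by
      congr 1; omega
    rw [hcard]
    field_simp
    ring
  -- the bad set and tail bounds
  set E : Set Ω := {ω | ¬ ∀ k, τ ω ≤ k → X k ω = X' k ω} with hE
  have hPE : P E = 0 := by rw [hE]; exact hfaithful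
  have hΔmeas : ∀ j, Measurable (Δ j) := fun j =>
    (hφm.comp (hXm j)).sub (hφm.comp (hX'm j))
  have hset : ∀ j, MeasurableSet {ω | Δ j ω ≠ 0} := fun j =>
    (hΔmeas j (measurableSet_singleton 0)).compl
  have hsub : ∀ j, {ω | Δ j ω ≠ 0} ⊆ {ω | j < τ ω} ∪ E := by
    intro j ω hω
    by_cases hωE : ω ∈ E
    · exact Or.inr hωE
    · left
      simp only [hE, Set.mem_setOf_eq, not_not] at hωE
      by_contra hc
      simp only [Set.mem_setOf_eq, not_lt] at hc
      have := hωE j hc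
      exact hω (by simp [hΔ, this])
  have hPΔ : ∀ j, P {ω | Δ j ω ≠ 0} ≤ ENNReal.ofReal (C * ρ ^ j) := by
    intro j
    calc P {ω | Δ j ω ≠ 0} ≤ P ({ω | j < τ ω} ∪ E) := measure_mono (hsub j)
      _ ≤ P {ω | j < τ ω} + P E := measure_union_le _ _
      _ = P {ω | j < τ ω} := by rw [hPE, add_zero]
      _ ≤ _ := htail j
  -- the counting function
  set T : Ω → ℝ≥0∞ :=
    fun ω => ∑' j : ℕ, Set.indicator {ω | Δ j ω ≠ 0} (1 : Ω → ℝ≥0∞) ω with hT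
  have hTmeas : Measurable T :=
    Measurable.ennreal_tsum fun j => measurable_one.indicator (hset j)
  have hTlint : ∫⁻ ω, T ω ∂P ≠ ⊤ := by
    have h1 : ∫⁻ ω, T ω ∂P = ∑' j : ℕ, P {ω | Δ j ω ≠ 0} := by
      rw [hT, lintegral_tsum fun j => (measurable_one.indicator (hset j)).aemeasurable]
      exact tsum_congr fun j => lintegral_indicator_one (hset j)
    have h2 : ∀ j : ℕ, P {ω | Δ j ω ≠ 0} ≤
        ENNReal.ofReal (max C 0) * ENNReal.ofReal ρ ^ j := by
      intro j
      refine (hPΔ j).trans ?_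
      rw [← ENNReal.ofReal_pow (le_of_lt hρ.1), ← ENNReal.ofReal_mul (le_max_right C 0)]
      exact ENNReal.ofReal_le_ofReal
        (mul_le_mul_of_nonneg_right (le_max_left C 0) (pow_nonneg (le_of_lt hρ.1) j))
    have h3 : (∑' j : ℕ, P {ω | Δ j ω ≠ 0}) ≤
        ENNReal.ofReal (max C 0) * (1 - ENNReal.ofReal ρ)⁻¹ := by
      calc (∑' j : ℕ, P {ω | Δ j ω ≠ 0})
          ≤ ∑' j : ℕ, ENNReal.ofReal (max C 0) * ENNReal.ofReal ρ ^ j := ENNReal.tsum_le_tsum h2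
        _ = ENNReal.ofReal (max C 0) * ∑' j : ℕ, ENNReal.ofReal ρ ^ j := ENNReal.tsum_mul_left
        _ = _ := by rw [ENNReal.tsum_geometric]
    rw [h1]
    refine ne_top_of_le_ne_top ?_ h3
    refine ENNReal.mul_ne_top ENNReal.ofReal_ne_top (ENNReal.inv_ne_top.2 ?_)
    rw [ne_eq, tsub_eq_zero_iff_le, not_le]
    exact ENNReal.ofReal_lt_one.2 hρ.2
  set bound : Ω → ℝ := fun ω => M + 2 * M * (T ω).toReal with hbound
  have hboundInt : Integrable bound P :=
    (integrable_const M).add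
      ((integrable_toReal_of_lintegral_ne_top hTmeas.aemeasurable hTlint).const_mul _)
  -- pointwise bound
  have hAbound : ∀ ω, |A ω| ≤ M := by
    intro ω
    rw [hA, abs_mul, abs_inv, Nat.abs_cast]
    have h1 : |∑ k ∈ Finset.Icc kstar mstar, φ (X k ω)| ≤ (N : ℝ) * M := by
      refine (Finset.abs_sum_le_sum_abs _ _).trans ?_
      calc ∑ k ∈ Finset.Icc kstar mstar, |φ (X k ω)|
          ≤ ∑ _k ∈ Finset.Icc kstar mstar, M := Finset.sum_le_sum fun k _ => hM _
        _ = (N : ℝ) * M := by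
            rw [Finset.sum_const, Nat.card_Icc, nsmul_eq_mul]
            have hc : ((mstar + 1 - kstar : ℕ) : ℝ) = (N : ℝ) := by congr 1; omega
            rw [hc]
    calc ((N : ℕ) : ℝ)⁻¹ * |∑ k ∈ Finset.Icc kstar mstar, φ (X k ω)|
        ≤ ((N : ℕ) : ℝ)⁻¹ * ((N : ℝ) * M) := by
          exact mul_le_mul_of_nonneg_left h1 (by positivity)
      _ = M := by field_simp
  have hwb : ∀ j, 0 ≤ w j ∧ w j ≤ 1 := by
    intro j
    constructor
    · rw [hw]; positivity
    · rw [hw, div_le_one hNpos]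
      exact_mod_cast Nat.cast_le.2 (min_le_left _ _)
  have hterm : ∀ j ω, |w j * Δ j ω| ≤ if Δ j ω = 0 then 0 else 2 * M := by
    intro j ω
    by_cases h0 : Δ j ω = 0
    · simp [h0]
    · rw [if_neg h0, abs_mul]
      have h1 : |Δ j ω| ≤ 2 * M := by
        rw [hΔ]
        calc |φ (X j ω) - φ (X' j ω)| ≤ |φ (X j ω)| + |φ (X' j ω)| := abs_sub _ _
          _ ≤ M + M := add_le_add (hM _) (hM _)
          _ = 2 * M := by ring
      calc |w j| * |Δ j ω| ≤ 1 * (2 * M) :=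
            mul_le_mul (abs_le.2 ⟨by linarith [(hwb j).1], (hwb j).2⟩) h1 (abs_nonneg _)
              zero_le_one
        _ = 2 * M := by ring
  have h_bound : ∀ n, ∀ᵐ ω ∂P, ‖g n ω‖ ≤ bound ω := by
    intro n
    filter_upwards [ae_lt_top hTmeas hTlint] with ω hTω
    have hcount : ∀ s : Finset ℕ,
        (∑ j ∈ s, (if Δ j ω = 0 then (0:ℝ) else 1)) ≤ (T ω).toReal := by
      intro s
      have h1 : (∑ j ∈ s, Set.indicator {ω | Δ j ω ≠ 0} (1 : Ω → ℝ≥0∞) ω) ≤ T ω :=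
        ENNReal.sum_le_tsum s
      have h2 : (∑ j ∈ s, Set.indicator {ω | Δ j ω ≠ 0} (1 : Ω → ℝ≥0∞) ω).toReal
          = ∑ j ∈ s, (if Δ j ω = 0 then (0:ℝ) else 1) := by
        rw [ENNReal.toReal_sum fun j _ => ?_]
        · refine Finset.sum_congr rfl fun j _ => ?_
          by_cases h0 : Δ j ω = 0
          · simp [Set.indicator, h0]
          · simp [Set.indicator, h0]
        · by_cases h0 : Δ j ω = 0 <;> simp [Set.indicator, h0]
      rw [← h2]
      exact ENNReal.toReal_mono (ne_of_lt hTω) h1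
    rw [Real.norm_eq_abs, hg]
    calc |A ω + ∑ j ∈ Finset.Ico (kstar + 1) (n + 1), w j * Δ j ω|
        ≤ |A ω| + |∑ j ∈ Finset.Ico (kstar + 1) (n + 1), w j * Δ j ω| := abs_add_le _ _
      _ ≤ M + ∑ j ∈ Finset.Ico (kstar + 1) (n + 1), (if Δ j ω = 0 then (0:ℝ) else 2 * M) := by
          refine add_le_add (hAbound ω) ((Finset.abs_sum_le_sum_abs _ _).trans ?_)
          exact Finset.sum_le_sum fun j _ => hterm j ω
      _ ≤ M + 2 * M * (T ω).toReal := by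
          refine add_le_add_right ?_ M
          have h3 : ∀ j, (if Δ j ω = 0 then (0:ℝ) else 2 * M)
              = 2 * M * (if Δ j ω = 0 then (0:ℝ) else 1) := by
            intro j; by_cases h0 : Δ j ω = 0 <;> simp [h0]
          rw [Finset.sum_congr rfl fun j _ => h3 j, ← Finset.mul_sum]
          exact mul_le_mul_of_nonneg_left (hcount _) (by positivity)
  -- pointwise convergence
  have h_lim : ∀ᵐ ω ∂P, Tendsto (fun n => g n ω) atTop (nhds (H ω)) := by
    filter_upwards [hfaithful] with ω hfω
    refine tendsto_const_nhds.congr' ?_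
    filter_upwards [eventually_ge_atTop (τ ω)] with n hn
    simp only [hg, hH]
    congr 1
    refine Finset.sum_subset (Finset.Ico_subset_Ico le_rfl (by omega)) ?_
    intro j hj hj'
    have hjτ : τ ω ≤ j := by
      have h1 := Finset.mem_Ico.1 hj
      simp only [Finset.mem_Ico, not_and, not_lt] at hj'
      exact hj' h1.1
    have : X j ω = X' j ω := hfω j hjτ
    simp [hΔ, this]
  have hHmeas : AEStronglyMeasurable H P :=
    aestronglyMeasurable_of_tendsto_ae atTop (fun n => (hgint n).aestronglyMeasurable) h_lim
  have hHbound : ∀ᵐ ω ∂P, ‖H ω‖ ≤ bound ω := by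
    have hall : ∀ᵐ ω ∂P, (∀ n, ‖g n ω‖ ≤ bound ω) ∧
        Tendsto (fun n => g n ω) atTop (nhds (H ω)) :=
      ((ae_all_iff.2 h_bound).and h_lim)
    filter_upwards [hall] with ω hω
    have := le_of_tendsto' (hω.2.norm) fun n => hω.1 n
    exact this
  have hHint : Integrable H P := hboundInt.mono' hHmeas hHbound
  have hHI : ∫ ω, H ω ∂P = ∫ s, φ s ∂π := by
    have t1 : Tendsto (fun n => ∫ ω, g n ω ∂P) atTop (nhds (∫ ω, H ω ∂P)) :=
      tendsto_integral_of_dominated_convergence bound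
        (fun n => (hgint n).aestronglyMeasurable) hboundInt h_bound h_lim
    have t2 : Tendsto (fun n => ∫ ω, g n ω ∂P) atTop (nhds (∫ s, φ s ∂π)) := by
      refine hconv.congr' ?_
      filter_upwards [eventually_ge_atTop mstar] with n hn
      exact (key n hn).symm
    exact tendsto_nhds_unique t1 t2
  exact ⟨hHint, hHI⟩
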